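/- arXiv:2207.01232 — 2 statements merged into one kernel-verified Lean document; each statement's English description precedes it below -/
import Mathlib

section
/- In a triangulated category, consider a distinguished triangle A₀ --f₀--> A₁ --(f₁, g₁)ᵀ--> A₂ ⊕ B₂ --(f₂, g₂)--> ΣA₀, where the last map has components f₂ : A₂ → ΣA₀ and g₂ : B₂ → ΣA₀. If g₂ = 0, then this triangle is isomorphic to the direct sum of a distinguished triangle A₀ --f₀--> A₁' --k--> A₂ --f₂--> ΣA₀ and the contractible triangle 0 → B₂ --𝟙--> B₂ → 0, provided the ambient category is idempotent complete. -/
open CategoryTheory Limits Pretriangulated ZeroObject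

universe v u

theorem triangle_splits_off_trivial_summand
    {C : Type u} [Category.{v} C] [Preadditive C] [HasZeroObject C] [HasShift C ℤ]
    [∀ n : ℤ, (shiftFunctor C n).Additive] [Pretriangulated C] [IsTriangulated C]
    [HasBinaryBiproducts C] [IsIdempotentComplete C]
    {A₀ A₁ A₂ B₂ : C} (f₀ : A₀ ⟶ A₁) (f₁ : A₁ ⟶ A₂) (g₁ : A₁ ⟶ B₂)
    (f₂ : A₂ ⟶ A₀⟦(1 : ℤ)⟧) (g₂ : B₂ ⟶ A₀⟦(1 : ℤ)⟧)
    (hT : Triangle.mk f₀ (biprod.lift f₁ g₁) (biprod.desc f₂ g₂) ∈ distTriang C)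
    (hg₂ : g₂ = 0) :
    ∃ (A₁' : C) (f₀' : A₀ ⟶ A₁') (k : A₁' ⟶ A₂),
      Triangle.mk f₀' k f₂ ∈ (distTriang C) ∧
      Nonempty ((Triangle.mk f₀ (biprod.lift f₁ g₁) (biprod.desc f₂ g₂)) ≅
        (Triangle.mk (biprod.lift f₀' (0 : A₀ ⟶ B₂)) (biprod.map k (𝟙 B₂))
          (biprod.desc f₂ 0))) := by
  subst hg₂
  obtain ⟨A₁', f₀', k, hD⟩ := Pretriangulated.distinguished_cocone_triangle₂ f₂
  refine ⟨A₁', f₀', k, hD, ?_⟩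
  set S : Triangle C := Triangle.mk (biprod.lift f₀' (0 : A₀ ⟶ B₂)) (biprod.map k (𝟙 B₂))
    (biprod.desc f₂ 0) with hS
  -- the family of two triangles
  let fam : WalkingPair → Triangle C := fun j => match j with
    | .left => Triangle.mk' _ _ _ f₀' k f₂
    | .right => Triangle.mk' _ _ _ (0 : (0 : C) ⟶ B₂) (𝟙 B₂) 0
  have hfam : ∀ j, fam j ∈ distTriang C := by
    rintro (_|_)
    · exact hD
    · exact contractible_distinguished₁ B₂
  have hP := productTriangle_distinguished fam hfam
  have hSdist : S ∈ distTriang C := by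
    let e₁ : A₀ ≅ ∏ᶜ (fun j => (fam j).obj₁) :=
      { hom := Pi.lift (fun j => match j with | .left => 𝟙 A₀ | .right => 0)
        inv := Pi.π (fun j => (fam j).obj₁) WalkingPair.left
        hom_inv_id := by simp
        inv_hom_id := by
          apply Limits.Pi.hom_ext
          rintro (_|_)
          · simp
          · exact (isZero_zero C).eq_of_tgt _ _ }
    let e₂ : A₁' ⊞ B₂ ≅ ∏ᶜ (fun j => (fam j).obj₂) :=
      { hom := Pi.lift (fun j => match j with
          | .left => (biprod.fst : A₁' ⊞ B₂ ⟶ _) | .right => biprod.snd)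
        inv := biprod.lift (Pi.π _ WalkingPair.left) (Pi.π _ WalkingPair.right)
        hom_inv_id := by apply biprod.hom_ext <;> simp [fam]
        inv_hom_id := by apply Limits.Pi.hom_ext; rintro (_|_) <;> simp [fam] }
    let e₃ : A₂ ⊞ B₂ ≅ ∏ᶜ (fun j => (fam j).obj₃) :=
      { hom := Pi.lift (fun j => match j with
          | .left => (biprod.fst : A₂ ⊞ B₂ ⟶ _) | .right => biprod.snd)
        inv := biprod.lift (Pi.π _ WalkingPair.left) (Pi.π _ WalkingPair.right)
        hom_inv_id := by apply biprod.hom_ext <;> simp [fam]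
        inv_hom_id := by apply Limits.Pi.hom_ext; rintro (_|_) <;> simp [fam] }
    refine isomorphic_distinguished _ hP _ (Triangle.isoMk _ _ e₁ e₂ e₃ ?_ ?_ ?_)
    · show biprod.lift f₀' (0 : A₀ ⟶ B₂) ≫ e₂.hom = e₁.hom ≫ Limits.Pi.map fun j => (fam j).mor₁
      apply Limits.Pi.hom_ext; rintro (_|_) <;> simp [e₁, e₂, fam, S]
    · show biprod.map k (𝟙 B₂) ≫ e₃.hom = e₂.hom ≫ Limits.Pi.map fun j => (fam j).mor₂
      apply Limits.Pi.hom_ext; rintro (_|_) <;> simp [e₂, e₃, fam, S]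
    · show biprod.desc f₂ (0 : B₂ ⟶ _) ≫ (shiftFunctor C (1:ℤ)).map e₁.hom = e₃.hom ≫
        (Limits.Pi.map fun j => (fam j).mor₃) ≫ inv (piComparison (shiftFunctor C (1:ℤ)) fun j => (fam j).obj₁)
      dsimp [productTriangle, e₁, e₃]
      rw [← cancel_mono (piComparison (shiftFunctor C (1:ℤ)) (fun j => (fam j).obj₁))]
      simp only [Category.assoc, IsIso.inv_hom_id, Category.comp_id]
      apply Limits.Pi.hom_ext
      rintro (_|_) <;>
        simp [piComparison_comp_π, ← Functor.map_comp, fam, S] <;>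
        apply biprod.hom_ext' <;> simp [S]
  -- now build the isomorphism of triangles
  obtain ⟨b, hb₁, hb₂⟩ := complete_distinguished_triangle_morphism₂ _ _ hT hSdist
    (𝟙 A₀) (𝟙 _) (by erw [CategoryTheory.Functor.map_id, Category.comp_id, Category.id_comp]; rfl)
  let φ : Triangle.mk f₀ (biprod.lift f₁ g₁) (biprod.desc f₂ 0) ⟶ S :=
    { hom₁ := 𝟙 _
      hom₂ := b
      hom₃ := 𝟙 _
      comm₁ := by exact hb₁
      comm₂ := by simpa using hb₂
      comm₃ := by erw [CategoryTheory.Functor.map_id, Category.comp_id, Category.id_comp]; rfl }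
  have h2 : IsIso φ.hom₂ := isIso₂_of_isIso₁₃ φ hT hSdist (inferInstanceAs (IsIso (𝟙 _))) (inferInstanceAs (IsIso (𝟙 _)))
  have : IsIso φ := Triangle.isIso_of_isIsos φ (inferInstanceAs (IsIso (𝟙 _))) h2 (inferInstanceAs (IsIso (𝟙 _)))
  exact ⟨asIso φ⟩
end

section
/- Let C be a triangulated category and A an extension-closed full additive subcategory closed under direct summands. Then the idempotent completion of A, viewed inside the idempotent completion of C (which is triangulated), is again extension-closed: for any morphism f : X₂ → Σ̃X₀ in Karoubi C with X₀, X₂ ∈ Karoubi A, there is a distinguished triangle X₀ → X₁ → X₂ --f--> Σ̃X₀ in Karoubi C with X₁ ∈ Karoubi A. -/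
open CategoryTheory Limits Pretriangulated CategoryTheory.Idempotents

universe v u

attribute [local instance] CategoryTheory.Limits.hasBinaryBiproducts_of_finite_biproducts

variable (C : Type u) [Category.{v} C] [Preadditive C] [HasShift C ℤ]

/-- The shift functor induced on the idempotent completion `Karoubi C`. -/
@[simps]
noncomputable def KS : Karoubi C ⥤ Karoubi C where
  obj P := ⟨P.X⟦(1 : ℤ)⟧, P.p⟦(1 : ℤ)⟧', by rw [← Functor.map_comp, P.idem]⟩
  map φ := ⟨φ.f⟦(1 : ℤ)⟧', by
    dsimp only; rw [← Functor.map_comp, ← Functor.map_comp, Karoubi.comp_p, Karoubi.p_comp]⟩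
  map_id P := by ext; simp
  map_comp φ ψ := by ext; simp

/-- A candidate triangle in `Karoubi C` with respect to the induced shift. -/
structure KTriangle where
  X₀ : Karoubi C
  X₁ : Karoubi C
  X₂ : Karoubi C
  f₀ : X₀ ⟶ X₁
  f₁ : X₁ ⟶ X₂
  f₂ : X₂ ⟶ (KS C).obj X₀

variable [HasFiniteBiproducts C]

/-- Componentwise direct sum of candidate triangles in `Karoubi C`. -/
noncomputable def KTriangle.sum (T T' : KTriangle C) : KTriangle C where
  X₀ := T.X₀ ⊞ T'.X₀
  X₁ := T.X₁ ⊞ T'.X₁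
  X₂ := T.X₂ ⊞ T'.X₂
  f₀ := biprod.map T.f₀ T'.f₀
  f₁ := biprod.map T.f₁ T'.f₁
  f₂ := biprod.desc (T.f₂ ≫ (KS C).map biprod.inl) (T'.f₂ ≫ (KS C).map biprod.inr)

/-- Isomorphism of candidate triangles in `Karoubi C`. -/
structure KTriangleIso (T T' : KTriangle C) where
  e₀ : T.X₀ ≅ T'.X₀
  e₁ : T.X₁ ≅ T'.X₁
  e₂ : T.X₂ ≅ T'.X₂
  comm₀ : T.f₀ ≫ e₁.hom = e₀.hom ≫ T'.f₀
  comm₁ : T.f₁ ≫ e₂.hom = e₁.hom ≫ T'.f₁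
  comm₂ : T.f₂ ≫ (KS C).map e₀.hom = e₂.hom ≫ T'.f₂

variable [HasZeroObject C] [∀ n : ℤ, (shiftFunctor C n).Additive] [Pretriangulated C]

/-- The image in `Karoubi C` of a triangle of `C`. -/
noncomputable def ofTriangle (T : Triangle C) : KTriangle C where
  X₀ := (toKaroubi C).obj T.obj₁
  X₁ := (toKaroubi C).obj T.obj₂
  X₂ := (toKaroubi C).obj T.obj₃
  f₀ := (toKaroubi C).map T.mor₁
  f₁ := (toKaroubi C).map T.mor₂
  f₂ := ⟨T.mor₃, by simp <;> exact Category.comp_id _⟩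

/-- A candidate triangle in `Karoubi C` is distinguished (in the sense of
Balmer–Schlichting) if some direct sum with another candidate triangle is isomorphic
to the image of a distinguished triangle of `C`. -/
noncomputable def DistK (T : KTriangle C) : Prop :=
  ∃ (T' : KTriangle C) (T₀ : Triangle C),
    T₀ ∈ (distTriang C) ∧ Nonempty (KTriangleIso C (T.sum C T') (ofTriangle C T₀))

section Aux

lemma endo_fix {D : Type*} [Category D] [Preadditive D] {B : D} (e : B ⟶ B)
    (hd : (e ≫ e - e) ≫ (e ≫ e - e) = 0) :
    ((3:ℤ) • (e ≫ e) - (2:ℤ) • (e ≫ e ≫ e)) ≫ ((3:ℤ) • (e ≫ e) - (2:ℤ) • (e ≫ e ≫ e))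
      = (3:ℤ) • (e ≫ e) - (2:ℤ) • (e ≫ e ≫ e) := by
  have h4 : e ≫ e ≫ e ≫ e = (2:ℤ) • (e ≫ e ≫ e) - e ≫ e := by
    rw [← sub_eq_zero, show e ≫ e ≫ e ≫ e - ((2:ℤ) • (e ≫ e ≫ e) - e ≫ e)
      = (e ≫ e - e) ≫ (e ≫ e - e) from by
        simp only [Preadditive.comp_sub, Preadditive.sub_comp, Category.assoc, two_zsmul]; abel]
    exact hd
  simp only [Preadditive.comp_sub, Preadditive.sub_comp, Preadditive.comp_zsmul,
    Preadditive.zsmul_comp, Category.assoc, h4, smul_sub, smul_smul]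
  abel

/-- complement of a Karoubi object -/
@[simps]
noncomputable def KCompl (P : Karoubi C) : Karoubi C :=
  ⟨P.X, 𝟙 P.X - P.p, by simp [Preadditive.sub_comp, Preadditive.comp_sub, P.idem]⟩

/-- inclusions of the summands -/
noncomputable def inK (P : Karoubi C) : P ⟶ (toKaroubi C).obj P.X :=
  ⟨P.p, by simp [P.idem]⟩

noncomputable def inK' (P : Karoubi C) : KCompl C P ⟶ (toKaroubi C).obj P.X :=
  ⟨𝟙 P.X - P.p, by simp [KCompl, Preadditive.sub_comp, Preadditive.comp_sub, P.idem]⟩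

/-- splitting iso -/
noncomputable def splitIso (P : Karoubi C) : P ⊞ KCompl C P ≅ (toKaroubi C).obj P.X where
  hom := biprod.desc (inK C P) (inK' C P)
  inv := biprod.lift ⟨P.p, by simp [P.idem]⟩
    ⟨𝟙 P.X - P.p, by simp [KCompl, Preadditive.sub_comp, Preadditive.comp_sub, P.idem]⟩
  hom_inv_id := by
    apply biprod.hom_ext' <;> apply biprod.hom_ext <;>
      simp only [Category.assoc, biprod.inl_desc_assoc, biprod.inr_desc_assoc, biprod.lift_fst,
        biprod.lift_snd, Category.id_comp, biprod.inl_fst, biprod.inl_snd, biprod.inr_fst,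
        biprod.inr_snd] <;>
      apply Karoubi.hom_ext _ _ <;>
      simp [Karoubi.comp_f, KCompl, inK, inK', Preadditive.sub_comp, Preadditive.comp_sub,
        P.idem, Karoubi.hom_eq_zero_iff] <;>
      rfl
  inv_hom_id := by
    rw [biprod.lift_desc]
    apply Karoubi.hom_ext
    simp [inK, inK', Preadditive.sub_comp, Preadditive.comp_sub, P.idem]
    change P.p + (𝟙 P.X - P.p) ≫ (𝟙 P.X - P.p) = 𝟙 P.X
    simp only [Preadditive.sub_comp, Preadditive.comp_sub, Category.id_comp, Category.comp_id, P.idem]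
    abel

omit [HasZeroObject C] [∀ (n : ℤ), (shiftFunctor C n).Additive] [Pretriangulated C] in
lemma splitIso_hom (P : Karoubi C) :
    (splitIso C P).hom = biprod.desc (inK C P) (inK' C P) := rfl

end Aux

theorem karoubi_of_extension_closed_is_extension_closed
    [IsTriangulated C]
    (S : Set C)
    (hiso : ∀ ⦃X Y : C⦄, (X ≅ Y) → X ∈ S → Y ∈ S)
    (hsum : ∀ ⦃X Y : C⦄, X ∈ S → Y ∈ S → (X ⊞ Y) ∈ S)
    (hsummand : ∀ ⦃X Y Z : C⦄, Nonempty (Z ≅ (X ⊞ Y)) → Z ∈ S → X ∈ S)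
    (hext : ∀ ⦃A₀ C₀ : C⦄, A₀ ∈ S → C₀ ∈ S → ∀ δ : C₀ ⟶ A₀⟦(1 : ℤ)⟧,
      ∃ (B : C) (_ : B ∈ S) (f : A₀ ⟶ B) (g : B ⟶ C₀),
        Triangle.mk f g δ ∈ distTriang C)
    (X₀ X₂ : Karoubi C) (hX₀ : X₀.X ∈ S) (hX₂ : X₂.X ∈ S)
    (φ : X₂ ⟶ (KS C).obj X₀) :
    ∃ (X₁ : Karoubi C) (_ : X₁.X ∈ S) (g₀ : X₀ ⟶ X₁) (g₁ : X₁ ⟶ X₂),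
      DistK C ⟨X₀, X₁, X₂, g₀, g₁, φ⟩ := by
  obtain ⟨B, hB, f, g, hT⟩ := hext hX₀ hX₂ φ.f
  have hφ1 : X₂.p ≫ φ.f = φ.f := Karoubi.p_comp φ
  have hφ2 : φ.f ≫ X₀.p⟦(1:ℤ)⟧' = φ.f := Karoubi.comp_p φ
  obtain ⟨e, he₁, he₂⟩ : ∃ e : B ⟶ B, f ≫ e = X₀.p ≫ f ∧ g ≫ X₂.p = e ≫ g :=
    complete_distinguished_triangle_morphism₂ _ _ hT hT X₀.p X₂.p (hφ2.trans hφ1.symm)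
  replace he₂ : e ≫ g = g ≫ X₂.p := he₂.symm
  -- he₁ : f ≫ e = X₀.p ≫ f, he₂ : e ≫ g = g ≫ X₂.p
  have hd1 : f ≫ (e ≫ e - e) = 0 := by
    simp only [Preadditive.comp_sub, reassoc_of% he₁, he₁, reassoc_of% X₀.idem, X₀.idem, sub_self]
  have hd2 : (e ≫ e - e) ≫ g = 0 := by
    simp only [Preadditive.sub_comp, Category.assoc, reassoc_of% he₂, he₂, X₂.idem, sub_self]
  obtain ⟨u, hu⟩ : ∃ u : X₂.X ⟶ B, e ≫ e - e = g ≫ u :=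
    Triangle.yoneda_exact₂ _ hT (e ≫ e - e) hd1
  have hd : (e ≫ e - e) ≫ (e ≫ e - e) = 0 := by
    nth_rewrite 2 [hu]
    rw [← Category.assoc, hd2, zero_comp]
  set E : B ⟶ B := (3:ℤ) • (e ≫ e) - (2:ℤ) • (e ≫ e ≫ e) with hEdef
  have hEE : E ≫ E = E := endo_fix e hd
  have hfE : f ≫ E = X₀.p ≫ f := by
    rw [hEdef]
    simp only [Preadditive.comp_sub, Preadditive.comp_zsmul, reassoc_of% he₁, he₁,
      reassoc_of% X₀.idem, X₀.idem]
    rw [show (3:ℤ) • (X₀.p ≫ f) - (2:ℤ) • (X₀.p ≫ f) = X₀.p ≫ f by abel]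
  have hEg : E ≫ g = g ≫ X₂.p := by
    rw [hEdef]
    simp only [Preadditive.sub_comp, Preadditive.zsmul_comp, Category.assoc,
      reassoc_of% he₂, he₂, reassoc_of% X₂.idem, X₂.idem]
    rw [show (3:ℤ) • (g ≫ X₂.p) - (2:ℤ) • (g ≫ X₂.p) = g ≫ X₂.p by abel]
  have hfE' : f ≫ (𝟙 B - E) = (𝟙 X₀.X - X₀.p) ≫ f := by
    simp only [Preadditive.comp_sub, Preadditive.sub_comp, Category.comp_id, Category.id_comp, hfE]
  have hEg' : (𝟙 B - E) ≫ g = g ≫ (𝟙 X₂.X - X₂.p) := by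
    simp only [Preadditive.comp_sub, Preadditive.sub_comp, Category.comp_id, Category.id_comp, hEg]
  have hp₀ : (𝟙 X₀.X - X₀.p) ≫ (𝟙 X₀.X - X₀.p) = 𝟙 X₀.X - X₀.p := by
    simp [Preadditive.sub_comp, Preadditive.comp_sub, X₀.idem]
  have hp₂ : (𝟙 X₂.X - X₂.p) ≫ (𝟙 X₂.X - X₂.p) = 𝟙 X₂.X - X₂.p := by
    simp [Preadditive.sub_comp, Preadditive.comp_sub, X₂.idem]
  have hpE : (𝟙 B - E) ≫ (𝟙 B - E) = 𝟙 B - E := by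
    simp [Preadditive.sub_comp, Preadditive.comp_sub, hEE]
  set X₁ : Karoubi C := ⟨B, E, hEE⟩ with hX₁def
  refine ⟨X₁, hB, ⟨X₀.p ≫ f, ?_⟩, ⟨g ≫ X₂.p, ?_⟩, ?_⟩
  · show X₀.p ≫ (X₀.p ≫ f) ≫ E = X₀.p ≫ f
    simp only [Category.assoc, hfE, reassoc_of% X₀.idem, X₀.idem]
  · show E ≫ (g ≫ X₂.p) ≫ X₂.p = g ≫ X₂.p
    simp only [Category.assoc, X₂.idem, reassoc_of% hEg, reassoc_of% X₂.idem]
  · -- the complementary candidate triangle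
    refine ⟨⟨KCompl C X₀, KCompl C X₁, KCompl C X₂,
        ⟨(𝟙 X₀.X - X₀.p) ≫ f ≫ (𝟙 B - E), ?_⟩,
        ⟨(𝟙 B - E) ≫ g ≫ (𝟙 X₂.X - X₂.p), ?_⟩, 0⟩,
      Triangle.mk f g φ.f, hT, ⟨?_⟩⟩
    · show (𝟙 X₀.X - X₀.p) ≫ ((𝟙 X₀.X - X₀.p) ≫ f ≫ (𝟙 B - E)) ≫ (𝟙 B - E) = _
      simp only [Category.assoc, reassoc_of% hp₀, hpE]
      rfl
    · show (𝟙 B - E) ≫ ((𝟙 B - E) ≫ g ≫ (𝟙 X₂.X - X₂.p)) ≫ (𝟙 X₂.X - X₂.p) = _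
      simp only [Category.assoc, reassoc_of% hpE, hp₂]
      rfl
    · refine
        { e₀ := splitIso C X₀
          e₁ := splitIso C X₁
          e₂ := splitIso C X₂
          comm₀ := ?_
          comm₁ := ?_
          comm₂ := ?_ }
      · show biprod.map _ _ ≫ (splitIso C X₁).hom = (splitIso C X₀).hom ≫ (toKaroubi C).map f
        rw [splitIso_hom, splitIso_hom]
        apply biprod.hom_ext'
        · rw [biprod.inl_map_assoc, biprod.inl_desc, biprod.inl_desc_assoc]
          apply Karoubi.hom_ext
          show (X₀.p ≫ f) ≫ E = X₀.p ≫ f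
          rw [Category.assoc, hfE, ← Category.assoc, X₀.idem]
        · rw [biprod.inr_map_assoc, biprod.inr_desc, biprod.inr_desc_assoc]
          apply Karoubi.hom_ext
          show ((𝟙 X₀.X - X₀.p) ≫ f ≫ (𝟙 B - E)) ≫ (𝟙 B - E) = (𝟙 X₀.X - X₀.p) ≫ f
          simp only [Category.assoc, hpE, reassoc_of% hfE', hfE', reassoc_of% hp₀]
      · show biprod.map _ _ ≫ (splitIso C X₂).hom = (splitIso C X₁).hom ≫ (toKaroubi C).map g
        rw [splitIso_hom, splitIso_hom]
        apply biprod.hom_ext'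
        · rw [biprod.inl_map_assoc, biprod.inl_desc, biprod.inl_desc_assoc]
          apply Karoubi.hom_ext
          show (g ≫ X₂.p) ≫ X₂.p = E ≫ g
          rw [Category.assoc, X₂.idem, hEg]
        · rw [biprod.inr_map_assoc, biprod.inr_desc, biprod.inr_desc_assoc]
          apply Karoubi.hom_ext
          show ((𝟙 B - E) ≫ g ≫ (𝟙 X₂.X - X₂.p)) ≫ (𝟙 X₂.X - X₂.p) = (𝟙 B - E) ≫ g
          simp only [Category.assoc, hp₂, reassoc_of% hEg', hEg', reassoc_of% hpE]
      · show biprod.desc (φ ≫ (KS C).map biprod.inl) ((0 : _) ≫ (KS C).map biprod.inr)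
            ≫ (KS C).map (splitIso C X₀).hom = (splitIso C X₂).hom ≫ _
        rw [splitIso_hom, splitIso_hom]
        apply biprod.hom_ext'
        · erw [biprod.inl_desc_assoc, biprod.inl_desc_assoc, Category.assoc,
            ← Functor.map_comp, biprod.inl_desc]
          apply Karoubi.hom_ext
          show φ.f ≫ X₀.p⟦(1:ℤ)⟧' = X₂.p ≫ φ.f
          rw [hφ2, hφ1]
        · erw [biprod.inr_desc_assoc, biprod.inr_desc_assoc, zero_comp, zero_comp]
          apply Karoubi.hom_ext
          show (0 : _) = (𝟙 X₂.X - X₂.p) ≫ φ.f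
          rw [Preadditive.sub_comp, Category.id_comp, hφ1, sub_self]
end
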